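/- If A is an invertible 2×2 complex matrix with A² = -I, then for any 2×2 complex matrix B and any even natural number τ, the sum A·∑_{j=0}^{τ-1} (-1)^j A^j B A^j equals (τ/2)·(AB + BA). -/

import Mathlib

open Matrix

noncomputable section

def σy : Matrix (Fin 2) (Fin 2) ℂ := !![0, -Complex.I; Complex.I, 0]
def σz : Matrix (Fin 2) (Fin 2) ℂ := !![1, 0; 0, -1]
def Rz (α : ℝ) : Matrix (Fin 2) (Fin 2) ℂ := NormedSpace.exp ((-(Complex.I * (α : ℂ) / 2)) • σz)
def Ry (β : ℝ) : Matrix (Fin 2) (Fin 2) ℂ := NormedSpace.exp ((-(Complex.I * (β : ℂ) / 2)) • σy)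

theorem stmt_1 (A B : Matrix (Fin 2) (Fin 2) ℂ) (hA : IsUnit A) (hA2 : A * A = -1)
    (τ : ℕ) (hτ : Even τ) :
    A * ∑ j ∈ Finset.range τ, ((-1 : ℂ) ^ j) • (A ^ j * B * A ^ j) =
      ((τ / 2 : ℕ) : ℂ) • (A * B + B * A) := by
  obtain ⟨m, hm⟩ := hτ
  have hm' : τ = 2 * m := by omega
  subst hm'
  have hpow : ∀ k : ℕ, A ^ (2 * k) = ((-1 : ℂ) ^ k) • 1 := by
    intro k
    rw [pow_mul, sq, hA2,
      show (-1 : Matrix (Fin 2) (Fin 2) ℂ) = ((-1 : ℂ)) • 1 by simp, smul_pow, one_pow]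
  have key : ∀ k : ℕ, ∑ j ∈ Finset.range (2 * k), ((-1 : ℂ) ^ j) • (A ^ j * B * A ^ j)
      = (k : ℂ) • (B - A * B * A) := by
    intro k
    induction k with
    | zero => simp
    | succ n ih =>
      have h2 : 2 * (n + 1) = (2 * n) + 1 + 1 := by ring
      rw [h2, Finset.sum_range_succ, Finset.sum_range_succ, ih, pow_succ A, hpow]
      have hc : ((-1 : ℂ) ^ n) * ((-1 : ℂ) ^ n) = (-1 : ℂ) ^ (2 * n) := by
        rw [two_mul, pow_add]
      have he : ((-1 : ℂ) ^ (2 * n)) = 1 := by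
        rw [pow_mul]; norm_num
      have ho : ((-1 : ℂ) ^ (2 * n + 1)) = -1 := by
        rw [pow_succ, he, one_mul]
      rw [he, ho]
      push_cast
      simp only [smul_mul_assoc, mul_smul_comm, one_mul, mul_one, one_smul, smul_smul]
      rw [hc, he]
      module
  rw [key m, Nat.mul_div_cancel_left m (by norm_num)]
  rw [mul_smul_comm, mul_sub, ← mul_assoc, ← mul_assoc, hA2, neg_one_mul, neg_mul,
    sub_neg_eq_add]
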